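/- arXiv:2012.14665 — 2 statements merged into one kernel-verified Lean document; each statement's English description precedes it below -/
import Mathlib

section
/- Let x : [-h_M, T] → ℝⁿ with T ≥ h_M be continuous, continuously differentiable on [0, T], and suppose ‖x'(t)‖ ≤ L · sup_{s ∈ [t - h_M, t]} ‖x(s)‖ for all t ∈ [0, T]. Then the shifted segment x_{h_M} : [-h_M, 0] → ℝⁿ, x_{h_M}(τ) = x(h_M + τ), belongs to W and ‖x_{h_M}‖_W ≤ (1 + e^{L h_M}) √(1 + h_M L²) · ‖x_0‖_∞, where x_0 is the restriction of x to [-h_M, 0]. -/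
open MeasureTheory Real Set intervalIntegral

/-- if `x : [-h_M, T] → ℝⁿ` (with `T ≥ h_M`) is continuous, continuously
differentiable on `[0,T]` with `‖x'(t)‖ ≤ L sup_{s∈[t-h_M,t]} ‖x(s)‖`, then the
shifted segment `x_{h_M}(τ) = x(h_M + τ)` belongs to `W` and
`‖x_{h_M}‖_W ≤ (1 + e^{L h_M}) √(1 + h_M L²) ‖x₀‖_∞`. -/
theorem shifted_segment_in_W_and_bound {n : ℕ} (hM L T : ℝ)
    (hhM : 0 < hM) (hL : 0 < L) (hT : hM ≤ T)
    (x x' : ℝ → EuclideanSpace ℝ (Fin n))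
    (hx : ContinuousOn x (Set.Icc (-hM) T))
    (hx' : ContinuousOn x' (Set.Icc (0:ℝ) T))
    (hderiv : ∀ t ∈ Set.Icc (0:ℝ) T, HasDerivWithinAt x (x' t) (Set.Icc (0:ℝ) T) t)
    (hbound : ∀ t ∈ Set.Icc (0:ℝ) T,
      ‖x' t‖ ≤ L * ⨆ s : Set.Icc (t - hM) t, ‖x s‖) :
    IntegrableOn (fun τ => ‖x' (hM + τ)‖ ^ 2) (Set.Icc (-hM) 0) ∧
    (∀ τ ∈ Set.Icc (-hM) 0,
      x (hM + 0) - x (hM + τ) = ∫ s in τ..0, x' (hM + s)) ∧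
    Real.sqrt (‖x hM‖ ^ 2 + ∫ τ in (-hM)..0, ‖x' (hM + τ)‖ ^ 2) ≤
      (1 + Real.exp (L * hM)) * Real.sqrt (1 + hM * L ^ 2) *
        ⨆ s : Set.Icc (-hM) (0:ℝ), ‖x s‖ := by
  have hT0 : (0:ℝ) < T := lt_of_lt_of_le hhM hT
  -- clamp function
  set c : ℝ → ℝ := fun t => max 0 (min t T) with hc
  have hcmem : ∀ t, c t ∈ Set.Icc (0:ℝ) T :=
    fun t => ⟨le_max_left _ _, max_le hT0.le (min_le_right _ _)⟩
  have hccont : Continuous c := continuous_const.max (continuous_id.min continuous_const)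
  have hceq : ∀ t ∈ Set.Icc (0:ℝ) T, c t = t := by
    intro t ht
    simp only [hc, min_eq_left ht.2, max_eq_right ht.1]
  set g : ℝ → ℝ := fun t => ‖x' (c t)‖ with hgdef
  have hg : Continuous g := (hx'.comp_continuous hccont hcmem).norm
  have hgnonneg : ∀ t, 0 ≤ g t := fun t => norm_nonneg _
  set ψ : ℝ → ℝ := fun t => ∫ s in (0:ℝ)..t, g s with hψdef
  have hψderiv : ∀ t, HasDerivAt ψ (g t) t :=
    fun t => (hg.integral_hasStrictDerivAt 0 t).hasDerivAt
  have hψ0 : ψ 0 = 0 := intervalIntegral.integral_same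
  have hψmono : Monotone ψ := by
    intro s t hst
    have h1 : ψ s + ∫ u in s..t, g u = ψ t :=
      intervalIntegral.integral_add_adjacent_intervals
        (hg.intervalIntegrable _ _) (hg.intervalIntegrable _ _)
    have h2 : (0:ℝ) ≤ ∫ u in s..t, g u :=
      intervalIntegral.integral_nonneg hst fun u _ => hgnonneg u
    linarith
  have hψnonneg : ∀ t, 0 ≤ t → 0 ≤ ψ t := fun t ht => hψ0 ▸ hψmono ht
  -- the sup M
  set M : ℝ := ⨆ s : Set.Icc (-hM) (0:ℝ), ‖x s‖ with hMdef
  have hxc0 : ContinuousOn (fun s => ‖x s‖) (Set.Icc (-hM) 0) :=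
    (hx.mono (Set.Icc_subset_Icc le_rfl hT0.le)).norm
  have hbddM : BddAbove (Set.range fun s : Set.Icc (-hM) (0:ℝ) => ‖x s‖) := by
    obtain ⟨C, hC⟩ := isCompact_Icc.bddAbove_image hxc0
    refine ⟨C, ?_⟩
    rintro y ⟨s, rfl⟩
    exact hC (Set.mem_image_of_mem _ s.2)
  have hleM : ∀ s ∈ Set.Icc (-hM) (0:ℝ), ‖x s‖ ≤ M := fun s hs => le_ciSup hbddM ⟨s, hs⟩
  have hM0 : 0 ≤ M := le_trans (norm_nonneg (x 0)) (hleM 0 ⟨by linarith, le_rfl⟩)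
  -- FTC for x
  have hFTC : ∀ a b : ℝ, 0 ≤ a → a ≤ b → b ≤ T → (∫ u in a..b, x' u) = x b - x a := by
    intro a b ha hab hbT
    refine intervalIntegral.integral_eq_sub_of_hasDeriv_right_of_le hab
      (hx.mono (Set.Icc_subset_Icc (by linarith) hbT)) ?_
      ((hx'.mono (Set.Icc_subset_Icc ha hbT)).intervalIntegrable_of_Icc hab)
    intro t ht
    have htT : t ∈ Set.Ioo (0:ℝ) T := ⟨lt_of_le_of_lt ha ht.1, lt_of_lt_of_le ht.2 hbT⟩
    exact ((hderiv t (Set.Ioo_subset_Icc_self htT)).hasDerivAt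
      (Icc_mem_nhds htT.1 htT.2)).hasDerivWithinAt
  -- ‖x s‖ ≤ M + ψ s on [0,T]
  have hxle : ∀ s ∈ Set.Icc (0:ℝ) T, ‖x s‖ ≤ M + ψ s := by
    intro s hs
    have h1 : x s - x 0 = ∫ u in (0:ℝ)..s, x' u := (hFTC 0 s le_rfl hs.1 hs.2).symm
    have h2 : ‖x s - x 0‖ ≤ ψ s := by
      rw [h1]
      calc ‖∫ u in (0:ℝ)..s, x' u‖ ≤ ∫ u in (0:ℝ)..s, ‖x' u‖ :=
            intervalIntegral.norm_integral_le_integral_norm hs.1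
        _ = ψ s := by
            refine intervalIntegral.integral_congr fun u hu => ?_
            rw [Set.uIcc_of_le hs.1] at hu
            rw [hgdef]
            simp only
            rw [hceq u ⟨hu.1, le_trans hu.2 hs.2⟩]
    have := norm_sub_norm_le (x s) (x 0)
    have hx0M : ‖x 0‖ ≤ M := hleM 0 ⟨by linarith, le_rfl⟩
    linarith
  -- sup over window bounded
  have hsup : ∀ t ∈ Set.Icc (0:ℝ) hM, (⨆ s : Set.Icc (t - hM) t, ‖x s‖) ≤ M + ψ t := by
    intro t ht
    haveI : Nonempty (Set.Icc (t - hM) t) := Set.nonempty_Icc_subtype (by linarith)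
    refine ciSup_le ?_
    rintro ⟨s, hs1, hs2⟩
    by_cases hs0 : s ≤ 0
    · exact le_trans (hleM s ⟨by linarith [ht.1], hs0⟩)
        (le_add_of_nonneg_right (hψnonneg t ht.1))
    · push_neg at hs0
      calc ‖x s‖ ≤ M + ψ s := hxle s ⟨hs0.le, by linarith [ht.2]⟩
        _ ≤ M + ψ t := by linarith [hψmono hs2]
  -- Gronwall
  have hGron : ∀ t ∈ Set.Icc (0:ℝ) hM, ψ t ≤ M * (Real.exp (L * t) - 1) := by
    have key := norm_le_gronwallBound_of_norm_deriv_right_le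
      (f := ψ) (f' := g) (δ := 0) (K := L) (ε := L * M) (a := 0) (b := hM)
      (fun t _ => (hψderiv t).continuousAt.continuousWithinAt)
      (fun t _ => (hψderiv t).hasDerivWithinAt)
      (by rw [hψ0]; simp) ?_
    · intro t ht
      have := key t ht
      rw [Real.norm_eq_abs, abs_of_nonneg (hψnonneg t ht.1)] at this
      rw [gronwallBound_of_K_ne_0 hL.ne'] at this
      simp only [sub_zero, zero_mul, zero_add] at this
      rw [mul_comm L M, mul_div_assoc, div_self hL.ne', mul_one] at this
      exact this
    · intro t ht
      have htT : t ∈ Set.Icc (0:ℝ) T := ⟨ht.1, le_trans ht.2.le hT⟩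
      have h1 : g t = ‖x' t‖ := by rw [hgdef]; simp only; rw [hceq t htT]
      rw [Real.norm_eq_abs, abs_of_nonneg (hgnonneg t), h1,
        Real.norm_eq_abs, abs_of_nonneg (hψnonneg t ht.1)]
      calc ‖x' t‖ ≤ L * ⨆ s : Set.Icc (t - hM) t, ‖x s‖ := hbound t htT
        _ ≤ L * (M + ψ t) := by
            have := hsup t ⟨ht.1, ht.2.le⟩
            nlinarith
        _ = L * ψ t + L * M := by ring
  -- pointwise bounds on [0, hM]
  set B : ℝ := M * Real.exp (L * hM) with hBdef
  have hB0 : 0 ≤ B := mul_nonneg hM0 (Real.exp_nonneg _)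
  have hxB : ∀ t ∈ Set.Icc (0:ℝ) hM, ‖x t‖ ≤ B := by
    intro t ht
    have h1 := hxle t ⟨ht.1, le_trans ht.2 hT⟩
    have h2 := hGron t ht
    have h3 : Real.exp (L * t) ≤ Real.exp (L * hM) :=
      Real.exp_le_exp.2 (by nlinarith [ht.2])
    nlinarith
  have hx'B : ∀ t ∈ Set.Icc (0:ℝ) hM, ‖x' t‖ ≤ L * B := by
    intro t ht
    have htT : t ∈ Set.Icc (0:ℝ) T := ⟨ht.1, le_trans ht.2 hT⟩
    have h2 := hGron t ht
    have h3 : Real.exp (L * t) ≤ Real.exp (L * hM) :=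
      Real.exp_le_exp.2 (by nlinarith [ht.2])
    calc ‖x' t‖ ≤ L * ⨆ s : Set.Icc (t - hM) t, ‖x s‖ := hbound t htT
      _ ≤ L * (M + ψ t) := by
          have := hsup t ht
          nlinarith
      _ ≤ L * B := by
          have h4 : M + ψ t ≤ B := by
            rw [hBdef]
            nlinarith [mul_le_mul_of_nonneg_left h3 hM0]
          exact mul_le_mul_of_nonneg_left h4 hL.le
  -- continuity of the shifted integrand
  have hmap : ∀ τ ∈ Set.Icc (-hM) (0:ℝ), hM + τ ∈ Set.Icc (0:ℝ) T := by
    intro τ hτ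
    exact ⟨by linarith [hτ.1], by linarith [hτ.2]⟩
  have hcont2 : ContinuousOn (fun τ => ‖x' (hM + τ)‖ ^ 2) (Set.Icc (-hM) 0) := by
    refine ((hx'.comp (continuous_const.add continuous_id).continuousOn hmap).norm.pow 2)
  refine ⟨hcont2.integrableOn_Icc, ?_, ?_⟩
  · -- FTC statement
    intro τ hτ
    rw [intervalIntegral.integral_comp_add_left]
    rw [hFTC (hM + τ) (hM + 0) (by linarith [hτ.1]) (by linarith [hτ.2]) (by linarith)]
  · -- the main bound
    have hint1 : IntervalIntegrable (fun τ => ‖x' (hM + τ)‖ ^ 2) volume (-hM) 0 :=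
      hcont2.intervalIntegrable_of_Icc (by linarith)
    have hIle : (∫ τ in (-hM)..0, ‖x' (hM + τ)‖ ^ 2) ≤ hM * (L * B) ^ 2 := by
      calc (∫ τ in (-hM)..0, ‖x' (hM + τ)‖ ^ 2) ≤ ∫ _ in (-hM)..0, (L * B) ^ 2 := by
            refine intervalIntegral.integral_mono_on (by linarith) hint1
              intervalIntegrable_const ?_
            intro τ hτ
            have := hx'B (hM + τ) ⟨by linarith [hτ.1], by linarith [hτ.2]⟩
            exact pow_le_pow_left₀ (norm_nonneg _) this 2
        _ = hM * (L * B) ^ 2 := by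
            rw [intervalIntegral.integral_const]
            simp [smul_eq_mul]
    have hxhMB : ‖x hM‖ ≤ B := hxB hM ⟨hhM.le, le_rfl⟩
    have h1 : ‖x hM‖ ^ 2 + (∫ τ in (-hM)..0, ‖x' (hM + τ)‖ ^ 2) ≤ (1 + hM * L ^ 2) * B ^ 2 := by
      have := pow_le_pow_left₀ (norm_nonneg _) hxhMB 2
      nlinarith
    calc Real.sqrt (‖x hM‖ ^ 2 + ∫ τ in (-hM)..0, ‖x' (hM + τ)‖ ^ 2)
        ≤ Real.sqrt ((1 + hM * L ^ 2) * B ^ 2) := Real.sqrt_le_sqrt h1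
      _ = Real.sqrt (1 + hM * L ^ 2) * B := by
          rw [Real.sqrt_mul (by nlinarith), Real.sqrt_sq hB0]
      _ ≤ (1 + Real.exp (L * hM)) * Real.sqrt (1 + hM * L ^ 2) * M := by
          rw [hBdef]
          have hs : 0 ≤ Real.sqrt (1 + hM * L ^ 2) := Real.sqrt_nonneg _
          nlinarith [Real.exp_pos (L * hM), mul_nonneg hs hM0]
end

section
/- Suppose the retarded system ẋ(t) = f(ζ(t), x_t), x|_{[-h_M,0]} = x_0, is (W, H)-stable with class-K function α and radius R, and suppose f is globally Lipschitz in its second argument with constant L uniformly in the first argument, with f(·, 0) = 0, and H is forward invariant. Then the system is (C⁰, H)-stable: there exist α̃ ∈ K and R̃ > 0 such that for every continuous initial condition x_0 with ‖x_0‖_∞ < R̃ and every ζ ∈ H, the solution exists on ℝ₊ and satisfies ‖x(t)‖ ≤ α̃(‖x_0‖_∞) for all t ≥ 0; one may take R̃ = R / ((1 + e^{L h_M})√(1 + h_M L²)) and α̃(s) = max(α((1 + e^{L h_M})√(1 + h_M L²) s), (1 + e^{L h_M}) s). -/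
open MeasureTheory Real Set intervalIntegral

/-- Sup norm of a function over the delay window `[-h_M, 0]`. -/
noncomputable def segSup {n : ℕ} (hM : ℝ) (φ : ℝ → EuclideanSpace ℝ (Fin n)) : ℝ :=
  ⨆ τ : Set.Icc (-hM) (0:ℝ), ‖φ τ‖

/-- The segment `x_t = x(t + ·)`. -/
def seg {n : ℕ} (x : ℝ → EuclideanSpace ℝ (Fin n)) (t : ℝ) :
    ℝ → EuclideanSpace ℝ (Fin n) := fun τ => x (t + τ)

/-- Global solution of the retarded equation `ẋ(t) = f(ζ(t), x_t)` on `ℝ₊` with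
initial condition `x₀` on `[-h_M, 0]`. -/
def IsSolution {n r : ℕ} (hM : ℝ)
    (f : (Fin r → ℝ) → (ℝ → EuclideanSpace ℝ (Fin n)) → EuclideanSpace ℝ (Fin n))
    (ζ : ℝ → Fin r → ℝ) (x₀ x : ℝ → EuclideanSpace ℝ (Fin n)) : Prop :=
  ContinuousOn x (Set.Ici (-hM)) ∧
  (∀ τ ∈ Set.Icc (-hM) (0:ℝ), x τ = x₀ τ) ∧
  ∀ t ≥ (0:ℝ), HasDerivWithinAt x (f (ζ t) (seg x t)) (Set.Ici t) t

/-- `x₀` is in `W`, with weak derivative `g`. -/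
def InW {n : ℕ} (hM : ℝ) (x₀ g : ℝ → EuclideanSpace ℝ (Fin n)) : Prop :=
  ContinuousOn x₀ (Set.Icc (-hM) 0) ∧
  MeasureTheory.IntegrableOn g (Set.Icc (-hM) 0) ∧
  (∀ t ∈ Set.Icc (-hM) (0:ℝ), x₀ 0 - x₀ t = ∫ s in t..0, g s) ∧
  MeasureTheory.IntegrableOn (fun s => ‖g s‖ ^ 2) (Set.Icc (-hM) 0)

/-- The `W`-norm of `x₀ ∈ W` with weak derivative `g`. -/
noncomputable def Wnorm {n : ℕ} (hM : ℝ) (x₀ g : ℝ → EuclideanSpace ℝ (Fin n)) : ℝ :=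
  Real.sqrt (‖x₀ 0‖ ^ 2 + ∫ s in (-hM)..0, ‖g s‖ ^ 2)

/-- Class `K` comparison function. -/
def ClassK (α : ℝ → ℝ) : Prop :=
  ContinuousOn α (Set.Ici 0) ∧ StrictMonoOn α (Set.Ici 0) ∧ α 0 = 0

/-- Forward invariance of a set of input signals. -/
def FwdInv {r : ℕ} (H : Set (ℝ → Fin r → ℝ)) : Prop :=
  ∀ ζ ∈ H, ∀ a > (0:ℝ), (fun t => ζ (t + a)) ∈ H

section Helpers
variable {n : ℕ} {hM : ℝ}

local notation "E" => EuclideanSpace ℝ (Fin n)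

lemma nonemptyIcc (hhM : 0 < hM) : Nonempty (Set.Icc (-hM) (0:ℝ)) :=
  ⟨⟨0, by constructor <;> linarith⟩⟩

lemma segSup_nonneg (φ : ℝ → E) : 0 ≤ segSup hM φ :=
  Real.iSup_nonneg fun τ => norm_nonneg _

lemma segSup_le (hhM : 0 < hM) {φ : ℝ → E} {C : ℝ}
    (h : ∀ τ ∈ Set.Icc (-hM) (0:ℝ), ‖φ τ‖ ≤ C) : segSup hM φ ≤ C := by
  have := nonemptyIcc (hM := hM) hhM
  exact ciSup_le fun τ => h τ τ.2

lemma le_segSup {φ : ℝ → E} (hφ : ContinuousOn φ (Set.Icc (-hM) 0))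
    {τ : ℝ} (hτ : τ ∈ Set.Icc (-hM) (0:ℝ)) : ‖φ τ‖ ≤ segSup hM φ := by
  have hb : BddAbove (Set.range fun τ : Set.Icc (-hM) (0:ℝ) => ‖φ τ‖) := by
    have : (Set.range fun τ : Set.Icc (-hM) (0:ℝ) => ‖φ τ‖) = (fun t => ‖φ t‖) '' Set.Icc (-hM) 0 := (Set.image_eq_range (fun t => ‖φ t‖) (Set.Icc (-hM) 0)).symm
    rw [this]
    exact isCompact_Icc.bddAbove_image (continuous_norm.comp_continuousOn hφ)
  exact le_ciSup hb ⟨τ, hτ⟩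

lemma segSup_eq_zero (hhM : 0 < hM) {φ : ℝ → E}
    (h : ∀ τ ∈ Set.Icc (-hM) (0:ℝ), φ τ = 0) : segSup hM φ = 0 := by
  have := nonemptyIcc (hM := hM) hhM
  refine le_antisymm (segSup_le hhM fun τ hτ => by rw [h τ hτ]; simp) (segSup_nonneg φ)

end Helpers

section FHelpers
variable {n r : ℕ} {hM L : ℝ} {A : Set (Fin r → ℝ)}
  {f : (Fin r → ℝ) → (ℝ → EuclideanSpace ℝ (Fin n)) → EuclideanSpace ℝ (Fin n)}

local notation "E" => EuclideanSpace ℝ (Fin n)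

lemma f_eq_of_eqOn (hhM : 0 < hM)
    (hfLip : ∀ ξ ∈ A, ∀ φ ψ : ℝ → E,
      ‖f ξ φ - f ξ ψ‖ ≤ L * segSup hM (fun τ => φ τ - ψ τ))
    {ξ : Fin r → ℝ} (hξ : ξ ∈ A) {φ ψ : ℝ → E}
    (h : ∀ τ ∈ Set.Icc (-hM) (0:ℝ), φ τ = ψ τ) : f ξ φ = f ξ ψ := by
  have h0 : segSup hM (fun τ => φ τ - ψ τ) = 0 :=
    segSup_eq_zero hhM fun τ hτ => by rw [h τ hτ]; simp
  have := hfLip ξ hξ φ ψ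
  rw [h0, mul_zero] at this
  have := le_antisymm this (norm_nonneg _)
  rwa [norm_eq_zero, sub_eq_zero] at this

/-- The composite vector field: `f` applied to the truncated window extension. -/
noncomputable def Fcomp (hM : ℝ)
    (f : (Fin r → ℝ) → (ℝ → EuclideanSpace ℝ (Fin n)) → EuclideanSpace ℝ (Fin n))
    (ζ : ℝ → Fin r → ℝ) (u : ℝ → EuclideanSpace ℝ (Fin n)) : ℝ → EuclideanSpace ℝ (Fin n) :=
  fun s => f (ζ s) (fun τ => if h : τ ∈ Set.Icc (-hM) (0:ℝ) then u (s + τ) else 0)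

lemma Fcomp_continuous {ζ : ℝ → Fin r → ℝ} {u : ℝ → E}
    (hfcont : Continuous fun p : (Fin r → ℝ) × C(Set.Icc (-hM) (0:ℝ), E) =>
      f p.1 (fun τ => if h : τ ∈ Set.Icc (-hM) (0:ℝ) then p.2 ⟨τ, h⟩ else 0))
    (hζ : Continuous ζ) (hu : Continuous u) : Continuous (Fcomp hM f ζ u) := by
  have hcur : Continuous fun s : ℝ => (ContinuousMap.curry
      ⟨fun p : ℝ × Set.Icc (-hM) (0:ℝ) => u (p.1 + p.2), by fun_prop⟩) s :=
    (ContinuousMap.curry _).continuous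
  have : Continuous fun s : ℝ => ((ζ s, (ContinuousMap.curry
      ⟨fun p : ℝ × Set.Icc (-hM) (0:ℝ) => u (p.1 + p.2), by fun_prop⟩) s) :
      (Fin r → ℝ) × C(Set.Icc (-hM) (0:ℝ), E)) := hζ.prodMk hcur
  exact hfcont.comp this

lemma Fcomp_eq (hhM : 0 < hM)
    (hfLip : ∀ ξ ∈ A, ∀ φ ψ : ℝ → E,
      ‖f ξ φ - f ξ ψ‖ ≤ L * segSup hM (fun τ => φ τ - ψ τ))
    {ζ : ℝ → Fin r → ℝ} {u v : ℝ → E} {s : ℝ} (hζ : ζ s ∈ A)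
    (h : ∀ τ ∈ Set.Icc (-hM) (0:ℝ), u (s + τ) = v (s + τ)) :
    Fcomp hM f ζ u s = f (ζ s) (seg v s) := by
  refine f_eq_of_eqOn hhM hfLip hζ fun τ hτ => ?_
  simp only [hτ, dif_pos, seg]
  exact h τ hτ

lemma Fcomp_lip (hhM : 0 < hM)
    (hfLip : ∀ ξ ∈ A, ∀ φ ψ : ℝ → E,
      ‖f ξ φ - f ξ ψ‖ ≤ L * segSup hM (fun τ => φ τ - ψ τ))
    (hL : 0 < L)
    {ζ : ℝ → Fin r → ℝ} {u v : ℝ → E} {s C : ℝ} (hζ : ζ s ∈ A)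
    (h : ∀ τ ∈ Set.Icc (-hM) (0:ℝ), ‖u (s + τ) - v (s + τ)‖ ≤ C) :
    ‖Fcomp hM f ζ u s - Fcomp hM f ζ v s‖ ≤ L * C := by
  refine le_trans (hfLip _ hζ _ _) (mul_le_mul_of_nonneg_left ?_ hL.le)
  refine segSup_le hhM fun τ hτ => ?_
  simp only [hτ, dif_pos]
  exact h τ hτ

lemma Fcomp_norm_le (hhM : 0 < hM)
    (hf0 : ∀ ξ ∈ A, f ξ (fun _ => 0) = 0)
    (hfLip : ∀ ξ ∈ A, ∀ φ ψ : ℝ → E,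
      ‖f ξ φ - f ξ ψ‖ ≤ L * segSup hM (fun τ => φ τ - ψ τ))
    (hL : 0 < L)
    {ζ : ℝ → Fin r → ℝ} {u : ℝ → E} {s C : ℝ} (hζ : ζ s ∈ A)
    (h : ∀ τ ∈ Set.Icc (-hM) (0:ℝ), ‖u (s + τ)‖ ≤ C) :
    ‖Fcomp hM f ζ u s‖ ≤ L * C := by
  have h0 : Fcomp hM f ζ (fun _ => 0) s = 0 := by
    have : (fun τ => if h : τ ∈ Set.Icc (-hM) (0:ℝ) then (0:E) else 0) = (fun _ : ℝ => (0:E)) := by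
      funext τ; split <;> rfl
    simp only [Fcomp, this]
    exact hf0 _ hζ
  calc ‖Fcomp hM f ζ u s‖ = ‖Fcomp hM f ζ u s - Fcomp hM f ζ (fun _ => 0) s‖ := by rw [h0, sub_zero]
  _ ≤ L * C := Fcomp_lip hhM hfLip hL hζ (by simpa using h)

/-- `f (ζ s) (seg x s)` in terms of `Fcomp`, when `x` agrees with `u` on the window. -/
lemma f_seg_norm_le (hhM : 0 < hM)
    (hf0 : ∀ ξ ∈ A, f ξ (fun _ => 0) = 0)
    (hfLip : ∀ ξ ∈ A, ∀ φ ψ : ℝ → E,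
      ‖f ξ φ - f ξ ψ‖ ≤ L * segSup hM (fun τ => φ τ - ψ τ))
    (hL : 0 < L)
    {ξ : Fin r → ℝ} (hξ : ξ ∈ A) {x : ℝ → E} {s C : ℝ}
    (h : ∀ τ ∈ Set.Icc (-hM) (0:ℝ), ‖x (s + τ)‖ ≤ C) :
    ‖f ξ (seg x s)‖ ≤ L * C := by
  have := hfLip ξ hξ (seg x s) (fun _ => 0)
  rw [hf0 ξ hξ, sub_zero] at this
  refine this.trans (mul_le_mul_of_nonneg_left ?_ hL.le)
  refine segSup_le hhM fun τ hτ => ?_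
  simpa [seg] using h τ hτ

end FHelpers

section Bound
variable {n r : ℕ} {hM L : ℝ} {A : Set (Fin r → ℝ)}
  {f : (Fin r → ℝ) → (ℝ → EuclideanSpace ℝ (Fin n)) → EuclideanSpace ℝ (Fin n)}

local notation "E" => EuclideanSpace ℝ (Fin n)

lemma key_bound (hhM : 0 < hM) (hL : 0 < L)
    (hfcont : Continuous fun p : (Fin r → ℝ) × C(Set.Icc (-hM) (0:ℝ), E) =>
      f p.1 (fun τ => if h : τ ∈ Set.Icc (-hM) (0:ℝ) then p.2 ⟨τ, h⟩ else 0))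
    (hf0 : ∀ ξ ∈ A, f ξ (fun _ => 0) = 0)
    (hfLip : ∀ ξ ∈ A, ∀ φ ψ : ℝ → E,
      ‖f ξ φ - f ξ ψ‖ ≤ L * segSup hM (fun τ => φ τ - ψ τ))
    {ζ : ℝ → Fin r → ℝ} (hζc : Continuous ζ) (hζA : ∀ t ≥ (0:ℝ), ζ t ∈ A)
    {x₀ x : ℝ → E} (hx₀ : ContinuousOn x₀ (Set.Icc (-hM) 0))
    (hsol : IsSolution hM f ζ x₀ x) :
    ∃ g : ℝ → E, Continuous g ∧
      (∀ s ≥ (0:ℝ), g s = f (ζ s) (seg x s)) ∧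
      (∀ a b : ℝ, 0 ≤ a → a ≤ b → x b - x a = ∫ s in a..b, g s) ∧
      (∀ t ∈ Set.Icc (0:ℝ) hM, ‖x t‖ ≤ segSup hM x₀ * Real.exp (L * hM)) ∧
      (∀ t ∈ Set.Icc (0:ℝ) hM, ‖g t‖ ≤ L * (segSup hM x₀ * Real.exp (L * hM))) := by
  obtain ⟨hxc, hxinit, hxdiff⟩ := hsol
  set s₀ := segSup hM x₀ with hs₀
  have hs₀0 : 0 ≤ s₀ := segSup_nonneg _
  -- the continuous extension of x to all of ℝ
  set xe : ℝ → E := fun t => x (max t (-hM)) with hxe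
  have hxec : Continuous xe :=
    hxc.comp_continuous (continuous_id.max continuous_const) (fun t => Set.mem_Ici.2 (le_max_right _ _))
  have hxee : ∀ w ≥ -hM, xe w = x w := fun w hw => by simp [hxe, max_eq_left hw]
  set g : ℝ → E := Fcomp hM f ζ xe with hg
  have hgc : Continuous g := Fcomp_continuous hfcont hζc hxec
  have hgeq : ∀ s ≥ (0:ℝ), g s = f (ζ s) (seg x s) := by
    intro s hs
    refine Fcomp_eq hhM hfLip (hζA s hs) fun τ hτ => hxee _ (by linarith [hτ.1])
  -- FTC
  have hftc : ∀ a b : ℝ, 0 ≤ a → a ≤ b → x b - x a = ∫ s in a..b, g s := by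
    intro a b ha hab
    rw [intervalIntegral.integral_eq_sub_of_hasDeriv_right_of_le hab
      (hxc.mono fun w hw => le_trans (by linarith) hw.1)
      (fun t ht => ((hxdiff t (by linarith [ht.1])).mono Set.Ioi_subset_Ici_self).congr_deriv
        (hgeq t (by linarith [ht.1])).symm)
      (hgc.intervalIntegrable _ _)]
  -- bound on x over the window by s₀
  have hwin : ∀ w ∈ Set.Icc (-hM) (0:ℝ), ‖x w‖ ≤ s₀ := fun w hw => by
    rw [hxinit w hw]; exact le_segSup hx₀ hw
  set u : ℝ → ℝ := fun t => s₀ + ∫ s in (0:ℝ)..t, ‖g s‖ with hu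
  have hgin : ∀ a b : ℝ, IntervalIntegrable (fun s => ‖g s‖) MeasureTheory.volume a b :=
    fun a b => (hgc.norm.intervalIntegrable _ _)
  have hule : ∀ t ≥ (0:ℝ), ‖x t‖ ≤ u t := by
    intro t ht
    have h1 : x t = x 0 + ∫ s in (0:ℝ)..t, g s := by
      have := hftc 0 t le_rfl ht; rw [← this]; abel
    have h2 : ‖x 0‖ ≤ s₀ := hwin 0 ⟨by linarith, le_rfl⟩
    calc ‖x t‖ ≤ ‖x 0‖ + ‖∫ s in (0:ℝ)..t, g s‖ := by rw [h1]; exact norm_add_le _ _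
    _ ≤ s₀ + ∫ s in (0:ℝ)..t, ‖g s‖ :=
        add_le_add h2 (intervalIntegral.norm_integral_le_integral_norm ht)
  have humono : ∀ a b : ℝ, 0 ≤ a → a ≤ b → u a ≤ u b := by
    intro a b ha hab
    have : u b - u a = ∫ s in a..b, ‖g s‖ := by
      simp only [hu, add_sub_add_left_eq_sub]
      exact intervalIntegral.integral_interval_sub_left (hgin _ _) (hgin _ _)
    nlinarith [intervalIntegral.integral_nonneg (μ := MeasureTheory.volume) hab (fun s _ => norm_nonneg (g s))]
  have hus₀ : ∀ t ≥ (0:ℝ), s₀ ≤ u t := by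
    intro t ht
    have := intervalIntegral.integral_nonneg (μ := MeasureTheory.volume) ht (fun s _ => norm_nonneg (g s))
    simp only [hu]; linarith
  have hgu : ∀ t ≥ (0:ℝ), ‖g t‖ ≤ L * u t := by
    intro t ht
    rw [hgeq t ht]
    refine f_seg_norm_le hhM hf0 hfLip hL (hζA t ht) fun τ hτ => ?_
    rcases le_or_gt (t + τ) 0 with hw | hw
    · exact le_trans (hwin _ ⟨by linarith [hτ.1], hw⟩) (hus₀ t ht)
    · exact le_trans (hule _ hw.le) (humono _ _ hw.le (by linarith [hτ.2]))
  -- Grönwall on u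
  have huderiv : ∀ t ∈ Set.Ico (0:ℝ) hM, HasDerivWithinAt u ‖g t‖ (Set.Ici t) t := by
    intro t _
    exact ((intervalIntegral.integral_hasDerivAt_right (hgin 0 t)
      (hgc.norm.stronglyMeasurableAtFilter _ _) hgc.norm.continuousAt).const_add
      s₀).hasDerivWithinAt
  have hucont : Continuous u :=
    continuous_const.add (intervalIntegral.continuous_primitive hgin 0)
  have hunn : ∀ t ≥ (0:ℝ), 0 ≤ u t := fun t ht => le_trans hs₀0 (hus₀ t ht)
  have hgron : ∀ t ∈ Set.Icc (0:ℝ) hM, ‖u t‖ ≤ gronwallBound s₀ L 0 (t - 0) := by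
    refine norm_le_gronwallBound_of_norm_deriv_right_le hucont.continuousOn huderiv ?_ ?_
    · simp only [hu, intervalIntegral.integral_same, add_zero, Real.norm_eq_abs,
        abs_of_nonneg hs₀0, le_refl]
    · intro t ht
      rw [Real.norm_eq_abs, Real.norm_eq_abs, abs_of_nonneg (norm_nonneg _),
        abs_of_nonneg (hunn t ht.1)]
      linarith [hgu t ht.1]
  have hufin : ∀ t ∈ Set.Icc (0:ℝ) hM, u t ≤ s₀ * Real.exp (L * hM) := by
    intro t ht
    have := hgron t ht
    rw [Real.norm_eq_abs, abs_of_nonneg (hunn t ht.1), sub_zero, gronwallBound_ε0] at this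
    refine this.trans (mul_le_mul_of_nonneg_left (Real.exp_le_exp.2 ?_) hs₀0)
    exact mul_le_mul_of_nonneg_left ht.2 hL.le
  exact ⟨g, hgc, hgeq, hftc, fun t ht => (hule t ht.1).trans (hufin t ht),
    fun t ht => (hgu t ht.1).trans (mul_le_mul_of_nonneg_left (hufin t ht) hL.le)⟩

end Bound

section Exist
variable {n r : ℕ} {hM L : ℝ} {A : Set (Fin r → ℝ)}
  {f : (Fin r → ℝ) → (ℝ → EuclideanSpace ℝ (Fin n)) → EuclideanSpace ℝ (Fin n)}

local notation "E" => EuclideanSpace ℝ (Fin n)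

set_option maxHeartbeats 1000000 in
lemma exists_solution (hhM : 0 < hM) (hL : 0 < L)
    (hfcont : Continuous fun p : (Fin r → ℝ) × C(Set.Icc (-hM) (0:ℝ), E) =>
      f p.1 (fun τ => if h : τ ∈ Set.Icc (-hM) (0:ℝ) then p.2 ⟨τ, h⟩ else 0))
    (hf0 : ∀ ξ ∈ A, f ξ (fun _ => 0) = 0)
    (hfLip : ∀ ξ ∈ A, ∀ φ ψ : ℝ → E,
      ‖f ξ φ - f ξ ψ‖ ≤ L * segSup hM (fun τ => φ τ - ψ τ))
    {ζ : ℝ → Fin r → ℝ} (hζc : Continuous ζ) (hζA : ∀ t ≥ (0:ℝ), ζ t ∈ A)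
    {x₀ : ℝ → E} (hx₀ : ContinuousOn x₀ (Set.Icc (-hM) 0)) :
    ∃ x, IsSolution hM f ζ x₀ x := by
  set s₀ := segSup hM x₀ with hs₀
  have hs₀0 : 0 ≤ s₀ := segSup_nonneg _
  -- clamped continuous initial data
  set cl : ℝ → ℝ := fun t => max (-hM) (min t 0) with hcl
  have hclmem : ∀ t, cl t ∈ Set.Icc (-hM) (0:ℝ) :=
    fun t => ⟨le_max_left _ _, max_le (by linarith) (min_le_right _ _)⟩
  have hcleq : ∀ t ∈ Set.Icc (-hM) (0:ℝ), cl t = t := fun t ht => by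
    simp only [hcl]; rw [min_eq_left ht.2, max_eq_right ht.1]
  set x₀c : ℝ → E := fun t => x₀ (cl t) with hx₀c
  have hx₀cc : Continuous x₀c := hx₀.comp_continuous (by fun_prop) hclmem
  have hx₀ceq : ∀ t ∈ Set.Icc (-hM) (0:ℝ), x₀c t = x₀ t := fun t ht => by
    simp only [hx₀c]; rw [hcleq t ht]
  have hx₀cb : ∀ t, ‖x₀c t‖ ≤ s₀ := fun t => le_segSup hx₀ (hclmem t)
  -- Picard iterates
  set X : ℕ → ℝ → E := fun k => Nat.rec x₀c
    (fun _ xk => fun t => x₀c (min t 0) + ∫ s in (0:ℝ)..(max t 0), Fcomp hM f ζ xk s) k with hX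
  have hXsucc : ∀ k t, X (k+1) t
      = x₀c (min t 0) + ∫ s in (0:ℝ)..(max t 0), Fcomp hM f ζ (X k) s := fun k t => rfl
  have hXc : ∀ k, Continuous (X k) := by
    intro k; induction k with
    | zero => exact hx₀cc
    | succ k ih =>
      have h1 : Continuous (Fcomp hM f ζ (X k)) := Fcomp_continuous hfcont hζc ih
      exact (hx₀cc.comp (by fun_prop)).add
        ((intervalIntegral.continuous_primitive (fun a b => h1.intervalIntegrable a b) 0).comp
          (by fun_prop))
  have hXint : ∀ k, ∀ a b : ℝ,
      IntervalIntegrable (Fcomp hM f ζ (X k)) MeasureTheory.volume a b :=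
    fun k a b => (Fcomp_continuous hfcont hζc (hXc k)).intervalIntegrable a b
  have hXpast : ∀ k, ∀ t ≤ (0:ℝ), X k t = x₀c t := by
    intro k t ht
    cases k with
    | zero => rfl
    | succ k =>
      rw [hXsucc, min_eq_left ht, max_eq_right ht, intervalIntegral.integral_same, add_zero]
  have hXpos : ∀ k, ∀ t ≥ (0:ℝ), X (k+1) t
      = x₀c 0 + ∫ s in (0:ℝ)..t, Fcomp hM f ζ (X k) s := by
    intro k t ht; rw [hXsucc, min_eq_right ht, max_eq_left ht]
  -- the fundamental estimate
  have hEst : ∀ k, ∀ t ≥ (0:ℝ), ‖X (k+1) t - X k t‖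
      ≤ s₀ * (L*t)^(k+1) / (Nat.factorial (k+1) : ℝ) := by
    intro k
    induction k with
    | zero =>
      intro t ht
      have h0 : X 0 t = x₀c 0 := by
        have : cl t = cl 0 := by simp only [hcl]; rw [min_eq_right ht]; simp
        show x₀c t = x₀c 0
        simp only [hx₀c, this]
      rw [hXpos 0 t ht, h0, add_sub_cancel_left]
      have hb := intervalIntegral.norm_integral_le_of_norm_le_const (C := L * s₀)
        (f := Fcomp hM f ζ (X 0)) (a := 0) (b := t) ?_
      · calc ‖∫ s in (0:ℝ)..t, Fcomp hM f ζ (X 0) s‖ ≤ L * s₀ * |t - 0| := hb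
        _ = s₀ * (L*t)^(0+1) / (Nat.factorial (0+1) : ℝ) := by
            rw [abs_of_nonneg (by linarith)]; simp [Nat.factorial]; ring
      · intro s hs
        rw [Set.uIoc_of_le ht] at hs
        exact Fcomp_norm_le hhM hf0 hfLip hL (hζA s hs.1.le) (fun τ _ => hx₀cb _)
    | succ k ih =>
      intro t ht
      have hsub : X (k+1+1) t - X (k+1) t
          = ∫ s in (0:ℝ)..t, (Fcomp hM f ζ (X (k+1)) s - Fcomp hM f ζ (X k) s) := by
        rw [hXpos (k+1) t ht, hXpos k t ht,
          intervalIntegral.integral_sub (hXint (k+1) 0 t) (hXint k 0 t)]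
        abel
      set C : ℝ := L * (s₀ * L^(k+1) / (Nat.factorial (k+1) : ℝ)) with hC
      have hC0 : 0 ≤ C := by positivity
      have hptb : ∀ s ∈ Set.Ioc (0:ℝ) t,
          ‖Fcomp hM f ζ (X (k+1)) s - Fcomp hM f ζ (X k) s‖ ≤ C * s^(k+1) := by
        intro s hs
        have hwin : ∀ τ ∈ Set.Icc (-hM) (0:ℝ),
            ‖X (k+1) (s+τ) - X k (s+τ)‖ ≤ s₀ * (L*s)^(k+1) / (Nat.factorial (k+1) : ℝ) := by
          intro τ hτ
          have hs0 : (0:ℝ) ≤ L * s := mul_nonneg hL.le hs.1.le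
          rcases le_or_gt (s + τ) 0 with hw | hw
          · rw [hXpast (k+1) _ hw, hXpast k _ hw, sub_self, norm_zero]
            exact div_nonneg (mul_nonneg hs₀0 (pow_nonneg hs0 _)) (Nat.cast_nonneg _)
          · refine (ih (s+τ) hw.le).trans ?_
            have h1 : L * (s + τ) ≤ L * s :=
              mul_le_mul_of_nonneg_left (by linarith [hτ.2]) hL.le
            have h2 : (L*(s+τ))^(k+1) ≤ (L*s)^(k+1) :=
              pow_le_pow_left₀ (mul_nonneg hL.le hw.le) h1 _
            gcongr s₀ * ?_ / _
        have h2 := Fcomp_lip hhM hfLip hL (hζA s hs.1.le) hwin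
        calc ‖Fcomp hM f ζ (X (k+1)) s - Fcomp hM f ζ (X k) s‖
            ≤ L * (s₀ * (L*s)^(k+1) / (Nat.factorial (k+1) : ℝ)) := h2
        _ = C * s^(k+1) := by rw [hC, mul_pow]; ring
      rw [hsub]
      have hmaj : IntervalIntegrable (fun s => C * s^(k+1)) MeasureTheory.volume 0 t :=
        (continuous_const.mul (continuous_pow _)).intervalIntegrable _ _
      have hae : ∀ᵐ s ∂(MeasureTheory.volume.restrict (Set.uIoc (0:ℝ) t)),
          ‖Fcomp hM f ζ (X (k+1)) s - Fcomp hM f ζ (X k) s‖ ≤ C * s^(k+1) := by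
        rw [Set.uIoc_of_le ht]
        exact MeasureTheory.ae_restrict_of_forall_mem measurableSet_Ioc hptb
      have h4 := intervalIntegral.norm_integral_le_abs_of_norm_le hae hmaj
      have h5 : ∫ s in (0:ℝ)..t, C * s^(k+1) = C * (t^(k+2) / ((k:ℝ)+2)) := by
        rw [intervalIntegral.integral_const_mul, integral_pow]
        rw [show ((0:ℝ))^(k+1+1) = 0 from zero_pow (by omega)]
        push_cast; ring
      refine h4.trans ?_
      have hfact : (Nat.factorial (k+1+1) : ℝ) = ((k:ℝ)+2) * (Nat.factorial (k+1) : ℝ) := by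
        rw [Nat.factorial_succ]; push_cast; ring
      have hkf : (0:ℝ) < (Nat.factorial (k+1) : ℝ) := by positivity
      have h6 : C * (t^(k+2) / ((k:ℝ)+2)) = s₀ * (L*t)^(k+1+1) / (Nat.factorial (k+1+1) : ℝ) := by
        rw [hC, hfact, mul_pow]
        field_simp
        ring
      rw [h5, abs_of_nonneg (mul_nonneg hC0 (div_nonneg (pow_nonneg ht _) (by positivity))), h6]
  -- summability of the majorant series
  have hsum : ∀ T : ℝ, Summable (fun k : ℕ => s₀ * (L*T)^(k+1) / (Nat.factorial (k+1) : ℝ)) := by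
    intro T
    have h1 : Summable (fun m : ℕ => (L*T)^m / (Nat.factorial m : ℝ)) :=
      Real.summable_pow_div_factorial _
    have h2 : Summable (fun k : ℕ => (L*T)^(k+1) / (Nat.factorial (k+1) : ℝ)) :=
      h1.comp_injective Nat.succ_injective
    simpa [mul_div_assoc] using h2.mul_left s₀
  -- estimate valid for all w ≤ T
  have hEst' : ∀ (k : ℕ) (T : ℝ), 0 ≤ T → ∀ w ≤ T, ‖X (k+1) w - X k w‖
      ≤ s₀ * (L*T)^(k+1) / (Nat.factorial (k+1) : ℝ) := by
    intro k T hT w hw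
    rcases le_or_gt w 0 with h | h
    · rw [hXpast (k+1) w h, hXpast k w h, sub_self, norm_zero]; positivity
    · refine (hEst k w h.le).trans ?_
      have h2 : (L*w)^(k+1) ≤ (L*T)^(k+1) :=
        pow_le_pow_left₀ (mul_nonneg hL.le h.le) (mul_le_mul_of_nonneg_left hw hL.le) _
      gcongr s₀ * ?_ / _
  have hsummand : ∀ w : ℝ, Summable (fun k : ℕ => X (k+1) w - X k w) := by
    intro w
    refine Summable.of_norm_bounded (hsum (max w 0)) ?_
    exact fun k => hEst' k (max w 0) (le_max_right _ _) w (le_max_left _ _)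
  -- the limit function
  set xl : ℝ → E := fun w => X 0 w + ∑' k : ℕ, (X (k+1) w - X k w) with hxl
  have hXtend : ∀ w, Filter.Tendsto (fun m => X m w) Filter.atTop (nhds (xl w)) := by
    intro w
    have h1 := (hsummand w).hasSum.tendsto_sum_nat
    simp only [Finset.sum_range_sub (fun i => X i w)] at h1
    have h2 := h1.add (tendsto_const_nhds (x := X 0 w))
    simp only [sub_add_cancel] at h2
    have h3 : xl w = (∑' (i : ℕ), (X (i + 1) w - X i w)) + X 0 w := by
      rw [hxl]; exact add_comm _ _
    rw [h3]; exact h2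
  have hxlpast : ∀ w ≤ (0:ℝ), xl w = x₀c w := by
    intro w hw
    have h0 : ∀ k : ℕ, X (k+1) w - X k w = 0 := fun k => by
      rw [hXpast (k+1) w hw, hXpast k w hw, sub_self]
    rw [hxl]
    simp only [h0, tsum_zero, add_zero]
    exact hXpast 0 w hw
  -- tail bound
  have htail : ∀ (T : ℝ), 0 ≤ T → ∀ (m : ℕ), ∀ w ≤ T, ‖xl w - X m w‖
      ≤ ∑' k : ℕ, s₀ * (L*T)^(k+m+1) / (Nat.factorial (k+m+1) : ℝ) := by
    intro T hT m w hw
    have hs := hsummand w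
    have hdiff : xl w - X m w = ∑' k : ℕ, (X (k+m+1) w - X (k+m) w) := by
      have h1 := Summable.sum_add_tsum_nat_add (f := fun k => X (k+1) w - X k w) m hs
      rw [Finset.sum_range_sub (fun i => X i w)] at h1
      rw [hxl]
      have : ∀ k : ℕ, X (k+m+1) w - X (k+m) w = X ((k+m)+1) w - X (k+m) w := fun k => rfl
      simp only [this]
      linear_combination (norm := module) -h1
    rw [hdiff]
    have hnsum : Summable (fun k : ℕ => ‖X (k+m+1) w - X (k+m) w‖) := by
      refine Summable.of_nonneg_of_le (fun k => norm_nonneg _)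
        (fun k => hEst' (k+m) T hT w hw) ?_
      exact (hsum T).comp_injective (add_left_injective m)
    refine (norm_tsum_le_tsum_norm hnsum).trans ?_
    exact Summable.tsum_le_tsum (fun k => hEst' (k+m) T hT w hw) hnsum
      ((hsum T).comp_injective (add_left_injective m))
  -- continuity of the limit
  have hxlc : Continuous xl := by
    rw [continuous_iff_continuousAt]
    intro t
    set T : ℝ := |t| + 1 with hT
    have hT0 : 0 ≤ T := by positivity
    have htu := tendstoUniformlyOn_tsum (hsum T)
      (f := fun (k : ℕ) (w : ℝ) => X (k+1) w - X k w) (s := Set.Icc (-T) T)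
      (fun k w hw => hEst' k T hT0 w hw.2)
    have hser : ContinuousOn (fun w => ∑' k : ℕ, (X (k+1) w - X k w)) (Set.Icc (-T) T) := by
      refine htu.continuousOn (Filter.Eventually.of_forall fun m => ?_).frequently
      exact (continuous_finset_sum _ fun i _ => (hXc (i+1)).sub (hXc i)).continuousOn
    have h1 : ContinuousOn xl (Set.Icc (-T) T) := (hXc 0).continuousOn.add hser
    refine h1.continuousAt (Icc_mem_nhds ?_ ?_)
    · have := neg_abs_le t; linarith
    · have := le_abs_self t; linarith
  have hGc : Continuous (Fcomp hM f ζ xl) := Fcomp_continuous hfcont hζc hxlc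
  -- the limit integral equation
  have hinteq : ∀ t ≥ (0:ℝ), xl t = x₀c 0 + ∫ s in (0:ℝ)..t, Fcomp hM f ζ xl s := by
    intro t ht
    have hlim1 : Filter.Tendsto (fun m => X (m+1) t) Filter.atTop (nhds (xl t)) :=
      (hXtend t).comp (Filter.tendsto_add_atTop_nat 1)
    have hlim2 : Filter.Tendsto (fun m => ∫ s in (0:ℝ)..t, Fcomp hM f ζ (X m) s)
        Filter.atTop (nhds (∫ s in (0:ℝ)..t, Fcomp hM f ζ xl s)) := by
      rw [tendsto_iff_norm_sub_tendsto_zero]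
      have hd : ∀ m : ℕ, ‖(∫ s in (0:ℝ)..t, Fcomp hM f ζ (X m) s)
          - ∫ s in (0:ℝ)..t, Fcomp hM f ζ xl s‖
          ≤ (L * (∑' k : ℕ, s₀ * (L*t)^(k+m+1) / (Nat.factorial (k+m+1) : ℝ))) * |t - 0| := by
        intro m
        rw [← intervalIntegral.integral_sub (hXint m 0 t) (hGc.intervalIntegrable 0 t)]
        refine intervalIntegral.norm_integral_le_of_norm_le_const ?_
        intro s hs
        rw [Set.uIoc_of_le ht] at hs
        refine Fcomp_lip hhM hfLip hL (hζA s hs.1.le) ?_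
        intro τ hτ
        rw [show X m (s+τ) - xl (s+τ) = -(xl (s+τ) - X m (s+τ)) from (neg_sub _ _).symm, norm_neg]
        exact htail t ht m (s+τ) (by linarith [hτ.2, hs.2])
      refine squeeze_zero_norm (fun m => by simpa using hd m) ?_
      have h0 : Filter.Tendsto (fun m : ℕ => ∑' k : ℕ,
          s₀ * (L*t)^(k+m+1) / (Nat.factorial (k+m+1) : ℝ)) Filter.atTop (nhds 0) := by
        have := tendsto_sum_nat_add (fun k : ℕ => s₀ * (L*t)^(k+1) / (Nat.factorial (k+1) : ℝ))
        exact this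
      have := (h0.const_mul L).mul_const |t - 0|
      simpa using this
    have heqm : (fun m => X (m+1) t)
        = fun m => x₀c 0 + ∫ s in (0:ℝ)..t, Fcomp hM f ζ (X m) s :=
      funext fun m => hXpos m t ht
    rw [heqm] at hlim1
    exact tendsto_nhds_unique hlim1 (tendsto_const_nhds.add hlim2)
  -- assemble the solution
  refine ⟨xl, hxlc.continuousOn, ?_, ?_⟩
  · intro τ hτ
    rw [hxlpast τ hτ.2]
    exact hx₀ceq τ hτ
  · intro t ht
    have hF : HasDerivAt (fun w => x₀c 0 + ∫ s in (0:ℝ)..w, Fcomp hM f ζ xl s)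
        (Fcomp hM f ζ xl t) t :=
      (intervalIntegral.integral_hasDerivAt_right (hGc.intervalIntegrable _ _)
        (hGc.stronglyMeasurableAtFilter _ _) hGc.continuousAt).const_add _
    have hFW := hF.hasDerivWithinAt (s := Set.Ici t)
    have h2 : HasDerivWithinAt xl (Fcomp hM f ζ xl t) (Set.Ici t) t :=
      hFW.congr (fun w hw => hinteq w (le_trans ht hw)) (hinteq t ht)
    have h3 : Fcomp hM f ζ xl t = f (ζ t) (seg xl t) :=
      Fcomp_eq hhM hfLip (hζA t ht) (fun τ _ => rfl)
    rwa [h3] at h2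

end Exist


set_option maxHeartbeats 1000000

/-- if the retarded system `ẋ = f(ζ(t), x_t)` is `(W,H)`-stable with
class-`K` function `α` and radius `R`, `f` is globally Lipschitz in its second
argument with constant `L` uniformly in the first, `f(·,0) = 0`, and `H` is forward
invariant, then the system is `(C⁰,H)`-stable with radius
`R̃ = R/((1+e^{L h_M})√(1+h_M L²))` and comparison function
`α̃(s) = max(α((1+e^{L h_M})√(1+h_M L²) s), (1+e^{L h_M}) s)`. -/
theorem W_stability_implies_C0_stability {n r : ℕ} (hM L R : ℝ)
    (hhM : 0 < hM) (hL : 0 < L) (hR : 0 < R)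
    (A : Set (Fin r → ℝ))
    (f : (Fin r → ℝ) → (ℝ → EuclideanSpace ℝ (Fin n)) → EuclideanSpace ℝ (Fin n))
    (hfcont : Continuous fun p : (Fin r → ℝ) × C(Set.Icc (-hM) (0:ℝ), EuclideanSpace ℝ (Fin n)) =>
      f p.1 (fun τ => if h : τ ∈ Set.Icc (-hM) (0:ℝ) then p.2 ⟨τ, h⟩ else 0))
    (hf0 : ∀ ξ ∈ A, f ξ (fun _ => 0) = 0)
    (hfLip : ∀ ξ ∈ A, ∀ φ ψ : ℝ → EuclideanSpace ℝ (Fin n),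
      ‖f ξ φ - f ξ ψ‖ ≤ L * segSup hM (fun τ => φ τ - ψ τ))
    (H : Set (ℝ → Fin r → ℝ)) (hHfi : FwdInv H)
    (hHcont : ∀ ζ ∈ H, Continuous ζ) (hHA : ∀ ζ ∈ H, ∀ t ≥ (0:ℝ), ζ t ∈ A)
    (α : ℝ → ℝ) (hα : ClassK α)
    (hWstab : ∀ x₀ g, InW hM x₀ g → Wnorm hM x₀ g < R → ∀ ζ ∈ H,
      (∃ x, IsSolution hM f ζ x₀ x) ∧
      ∀ x, IsSolution hM f ζ x₀ x → ∀ t ≥ (0:ℝ), ‖x t‖ ≤ α (Wnorm hM x₀ g)) :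
    ∀ x₀ : ℝ → EuclideanSpace ℝ (Fin n), ContinuousOn x₀ (Set.Icc (-hM) 0) →
      segSup hM x₀ < R / ((1 + Real.exp (L * hM)) * Real.sqrt (1 + hM * L ^ 2)) →
      ∀ ζ ∈ H,
        (∃ x, IsSolution hM f ζ x₀ x) ∧
        ∀ x, IsSolution hM f ζ x₀ x → ∀ t ≥ (0:ℝ),
          ‖x t‖ ≤ max
            (α ((1 + Real.exp (L * hM)) * Real.sqrt (1 + hM * L ^ 2) * segSup hM x₀))
            ((1 + Real.exp (L * hM)) * segSup hM x₀) := by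
  intro x₀ hx₀ hsmall ζ hζ
  have hζc := hHcont ζ hζ
  have hζA := hHA ζ hζ
  set s₀ := segSup hM x₀ with hs₀def
  have hs₀0 : 0 ≤ s₀ := segSup_nonneg _
  set K1 : ℝ := 1 + Real.exp (L * hM) with hK1
  set K2 : ℝ := Real.sqrt (1 + hM * L^2) with hK2
  have hK1pos : 0 < K1 := by positivity
  have hK2pos : 0 < K2 := Real.sqrt_pos.2 (by positivity)
  have hsmall' : K1 * K2 * s₀ < R := by
    have hpos : 0 < K1 * K2 := by positivity
    have h := (lt_div_iff₀ hpos).1 hsmall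
    calc K1 * K2 * s₀ = s₀ * (K1 * K2) := by ring
    _ < R := h
  refine ⟨exists_solution hhM hL hfcont hf0 hfLip hζc hζA hx₀, ?_⟩
  intro x hsol t ht
  obtain ⟨g, hgc, hgeq, hftc, hxb, hgb⟩ :=
    key_bound hhM hL hfcont hf0 hfLip hζc hζA hx₀ hsol
  set B := s₀ * Real.exp (L*hM) with hB
  have hB0 : 0 ≤ B := by positivity
  have hBK : B ≤ K1 * s₀ := by
    rw [hB, hK1]; nlinarith [Real.exp_pos (L*hM), hs₀0]
  -- the shifted initial condition / solution
  set y₀ : ℝ → EuclideanSpace ℝ (Fin n) := fun τ => x (τ + hM) with hy₀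
  set g' : ℝ → EuclideanSpace ℝ (Fin n) := fun s => g (s + hM) with hg'
  set ζ' : ℝ → Fin r → ℝ := fun s => ζ (s + hM) with hζ'
  have hζ'H : ζ' ∈ H := hHfi ζ hζ hM hhM
  have hy₀c : ContinuousOn y₀ (Set.Icc (-hM) 0) := by
    refine hsol.1.comp (Continuous.continuousOn (by fun_prop)) ?_
    intro τ hτ
    simp only [Set.mem_Ici]
    linarith [hτ.1]
  have hg'c : Continuous g' := hgc.comp (by fun_prop)
  have hftcy : ∀ τ ∈ Set.Icc (-hM) (0:ℝ), y₀ 0 - y₀ τ = ∫ s in τ..0, g' s := by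
    intro τ hτ
    have h1 := hftc (τ + hM) hM (by linarith [hτ.1]) (by linarith [hτ.2])
    have h2 : ∫ s in τ..0, g' s = ∫ s in (τ+hM)..hM, g s := by
      rw [hg']
      rw [intervalIntegral.integral_comp_add_right g hM, zero_add]
    rw [h2, ← h1, hy₀]
    simp [zero_add]
  have hInW : InW hM y₀ g' :=
    ⟨hy₀c, hg'c.integrableOn_Icc, hftcy, (hg'c.norm.pow 2).integrableOn_Icc⟩
  -- Wnorm bound
  have hxhM : ‖x hM‖ ≤ B := by simpa [hB] using hxb hM ⟨hhM.le, le_rfl⟩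
  have hWn : Wnorm hM y₀ g' ≤ K2 * B := by
    rw [Wnorm]
    have h1 : ‖y₀ 0‖ ≤ B := by simpa [hy₀, zero_add] using hxhM
    have h2 : ∫ s in (-hM)..0, ‖g' s‖^2 = ∫ s in (0:ℝ)..hM, ‖g s‖^2 := by
      rw [hg']
      rw [intervalIntegral.integral_comp_add_right (fun u => ‖g u‖^2) hM, zero_add, neg_add_cancel]
    have h3 : ∫ s in (0:ℝ)..hM, ‖g s‖^2 ≤ hM * (L*B)^2 := by
      have hb : ∀ s ∈ Set.Icc (0:ℝ) hM, ‖g s‖^2 ≤ (L*B)^2 := by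
        intro s hs
        have h4 : ‖g s‖ ≤ L * B := hgb s hs
        exact pow_le_pow_left₀ (norm_nonneg _) h4 2
      have hmono := intervalIntegral.integral_mono_on (μ := MeasureTheory.volume) hhM.le
        ((hgc.norm.pow 2).intervalIntegrable 0 hM) intervalIntegrable_const hb
      have hconst : ∫ s in (0:ℝ)..hM, (L*B)^2 = hM * (L*B)^2 := by simp [mul_comm]
      simp only [Pi.pow_apply] at hmono
      linarith [hmono, hconst]
    calc Real.sqrt (‖y₀ 0‖^2 + ∫ s in (-hM)..0, ‖g' s‖^2)
        ≤ Real.sqrt (B^2 + hM * (L*B)^2) := by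
          refine Real.sqrt_le_sqrt ?_
          have := pow_le_pow_left₀ (norm_nonneg (y₀ 0)) h1 2
          rw [h2]; linarith [h3]
    _ = K2 * B := by
        rw [hK2, show B^2 + hM*(L*B)^2 = (1 + hM*L^2) * B^2 by ring,
          Real.sqrt_mul (by positivity), Real.sqrt_sq hB0]
  have hWnR : Wnorm hM y₀ g' < R := by
    refine lt_of_le_of_lt hWn ?_
    calc K2 * B ≤ K2 * (K1 * s₀) := mul_le_mul_of_nonneg_left hBK hK2pos.le
    _ = K1 * K2 * s₀ := by ring
    _ < R := hsmall'
  -- the shifted solution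
  have hysol : IsSolution hM f ζ' y₀ y₀ := by
    refine ⟨?_, fun τ _ => rfl, ?_⟩
    · refine hsol.1.comp (Continuous.continuousOn (by fun_prop)) ?_
      intro s hs
      simp only [Set.mem_Ici] at hs ⊢
      linarith
    · intro τ hτ
      have hd := hsol.2.2 (τ + hM) (by linarith)
      have hi : HasDerivWithinAt (fun s : ℝ => s + hM) 1 (Set.Ici τ) τ :=
        ((hasDerivAt_id τ).add_const hM).hasDerivWithinAt
      have hmaps : Set.MapsTo (fun s : ℝ => s + hM) (Set.Ici τ) (Set.Ici (τ + hM)) :=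
        fun s hs => by simp only [Set.mem_Ici] at hs ⊢; linarith
      have hcomp := hd.scomp τ hi hmaps
      simp only [one_smul] at hcomp
      have hseg : f (ζ' τ) (seg y₀ τ) = f (ζ (τ + hM)) (seg x (τ + hM)) := by
        have harg : (seg y₀ τ) = (seg x (τ + hM)) := by
          funext u
          show x (τ + u + hM) = x (τ + hM + u)
          exact congrArg x (by ring)
        rw [harg]
      rw [hseg]
      exact hcomp
  -- stability of the shifted solution
  have hstab := (hWstab y₀ g' hInW hWnR ζ' hζ'H).2 y₀ hysol
  have hWn0 : 0 ≤ Wnorm hM y₀ g' := Real.sqrt_nonneg _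
  have hαle : α (Wnorm hM y₀ g') ≤ α (K1 * K2 * s₀) := by
    refine hα.2.1.monotoneOn (Set.mem_Ici.2 hWn0) (Set.mem_Ici.2 (by positivity)) ?_
    refine hWn.trans ?_
    calc K2 * B ≤ K2 * (K1 * s₀) := mul_le_mul_of_nonneg_left hBK hK2pos.le
    _ = K1 * K2 * s₀ := by ring
  rcases le_or_gt t hM with hcase | hcase
  · refine le_max_of_le_right ?_
    calc ‖x t‖ ≤ s₀ * Real.exp (L * hM) := hxb t ⟨ht, hcase⟩
    _ ≤ K1 * s₀ := hBK
  · have h1 : ‖y₀ (t - hM)‖ ≤ α (Wnorm hM y₀ g') := hstab (t - hM) (by linarith)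
    have h2 : y₀ (t - hM) = x t := congrArg x (by ring)
    refine le_max_of_le_left ?_
    rw [← h2]
    exact h1.trans hαle
end
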